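/- Let E be a finite field of order q, let p be a prime with p ≠ char(E) and p not dividing q − 1, and fix an algebraic closure K of E. Let μ ∈ E be nonzero. Then the equation ν^p = μ has exactly p solutions ν in K, exactly one of which lies in E; and for every solution ν not lying in E, the subfield E(ν) of K generated by ν over E is the smallest extension field of E inside K whose order is congruent to 1 modulo p (i.e., |E(ν)| ≡ 1 (mod p), and E(ν) is contained in every finite subfield of K that contains E and has order ≡ 1 (mod p)). -/

import Mathlib

/-- Let `E` be a finite field of order `q`, `p` a prime with `p ≠ char E` and
`p ∤ q − 1`, and `K` an algebraic closure of `E`. For nonzero `μ ∈ E`, the equation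
`ν^p = μ` has exactly `p` solutions in `K`, exactly one of which lies in `E`; and for
every solution `ν ∉ E`, the field `E(ν)` is the smallest extension of `E` inside `K`
whose order is congruent to `1` modulo `p`. -/
theorem pth_roots_in_algebraic_closure
    {E K : Type*} [Field E] [Fintype E] [Field K] [Algebra E K]
    [IsAlgClosure E K]
    (p : ℕ) (hp : p.Prime) (hchar : p ≠ ringChar E)
    (hdvd : ¬ p ∣ (Fintype.card E - 1))
    (μ : E) (hμ : μ ≠ 0) :
    ({ν : K | ν ^ p = algebraMap E K μ}.ncard = p) ∧
    (∃! ν : K, ν ^ p = algebraMap E K μ ∧ ν ∈ (algebraMap E K).range) ∧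
    (∀ ν : K, ν ^ p = algebraMap E K μ → ν ∉ (algebraMap E K).range →
      Finite ↥(IntermediateField.adjoin E {ν}) ∧
      Nat.card ↥(IntermediateField.adjoin E {ν}) % p = 1 ∧
      ∀ L : IntermediateField E K, Finite ↥L → Nat.card ↥L % p = 1 →
        IntermediateField.adjoin E {ν} ≤ L) := by
  haveI : Fact p.Prime := ⟨hp⟩
  haveI : NeZero p := ⟨hp.ne_zero⟩
  haveI : IsAlgClosed K := IsAlgClosure.isAlgClosed E
  haveI : Algebra.IsAlgebraic E K := IsAlgClosure.isAlgebraic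
  have hinj := (algebraMap E K).injective
  set q := Fintype.card E with hq
  have hcop : Nat.Coprime p (q - 1) := (hp.coprime_iff_not_dvd).mpr hdvd
  -- characteristic facts
  have hchK : CharP K (ringChar E) :=
    charP_of_injective_algebraMap hinj (ringChar E)
  haveI : NeZero ((p : ℕ) : K) := by
    constructor
    intro h
    have hd : ringChar E ∣ p := (CharP.cast_eq_zero_iff K (ringChar E) p).mp h
    have hpr : (ringChar E).Prime := CharP.char_is_prime E (ringChar E)
    exact hchar ((Nat.prime_dvd_prime_iff_eq hpr hp).mp hd).symm
  -- x ↦ x^p injective on E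
  have hpow_inj : Function.Injective (fun x : E => x ^ p) := by
    intro a b hab
    simp only at hab
    rcases eq_or_ne b 0 with rfl | hb
    · rw [zero_pow hp.ne_zero] at hab
      exact pow_eq_zero_iff hp.ne_zero |>.mp hab
    · have ha : a ≠ 0 := by
        intro h
        rw [h, zero_pow hp.ne_zero] at hab
        exact hb (pow_eq_zero_iff hp.ne_zero |>.mp hab.symm)
      have h1 : (a / b) ^ p = 1 := by
        rw [div_pow, hab, div_self (pow_ne_zero _ hb)]
      have h2 : (a / b) ^ (q - 1) = 1 :=
        FiniteField.pow_card_sub_one_eq_one _ (div_ne_zero ha hb)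
      have hd1 : orderOf (a / b) ∣ p := orderOf_dvd_of_pow_eq_one h1
      have hd2 : orderOf (a / b) ∣ q - 1 := orderOf_dvd_of_pow_eq_one h2
      have : orderOf (a / b) = 1 :=
        Nat.eq_one_of_dvd_coprimes hcop hd1 hd2
      have : a / b = 1 := orderOf_eq_one_iff.mp this
      field_simp at this
      exact this
  have hpow_surj : Function.Surjective (fun x : E => x ^ p) :=
    Finite.injective_iff_surjective.mp hpow_inj
  obtain ⟨ν₀, hν₀⟩ := hpow_surj μ
  simp only at hν₀
  have hν₀ne : ν₀ ≠ 0 := by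
    intro h; rw [h, zero_pow hp.ne_zero] at hν₀; exact hμ hν₀.symm
  set ν₁ : K := algebraMap E K ν₀ with hν₁def
  have hν₁ : ν₁ ^ p = algebraMap E K μ := by
    rw [hν₁def, ← map_pow, hν₀]
  have hν₁ne : ν₁ ≠ 0 := by
    simpa [hν₁def] using hν₀ne
  have hμKne : algebraMap E K μ ≠ 0 := by simpa using hμ
  -- primitive p-th root of unity in K
  obtain ⟨ξ, hξ⟩ := HasEnoughRootsOfUnity.exists_primitiveRoot K p
  -- key: for finite intermediate fields, a p-th root of unity z ≠ 1 lies in L iff card ≡ 1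
  have key₁ : ∀ (z : K), z ^ p = 1 → z ≠ 1 → ∀ L : IntermediateField E K, Finite ↥L →
      z ∈ L → Nat.card ↥L % p = 1 := by
    intro z hzp hz1 L hLfin hzL
    haveI := hLfin
    haveI := Fintype.ofFinite ↥L
    set zL : ↥L := ⟨z, hzL⟩ with hzLdef
    have hzLp : zL ^ p = 1 := by
      ext; push_cast [hzLdef]; exact hzp
    have hzL1 : zL ≠ 1 := by
      intro h; apply hz1
      have := congrArg (Subtype.val) h
      exact this
    have hzLne : zL ≠ 0 := by
      intro h; rw [h, zero_pow hp.ne_zero] at hzLp; exact one_ne_zero hzLp.symm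
    have hord : orderOf zL = p := orderOf_eq_prime hzLp hzL1
    have hpow : zL ^ (Fintype.card ↥L - 1) = 1 :=
      FiniteField.pow_card_sub_one_eq_one zL hzLne
    have hdvd' : p ∣ Fintype.card ↥L - 1 := hord ▸ orderOf_dvd_of_pow_eq_one hpow
    have hcard2 : 2 ≤ Fintype.card ↥L := Fintype.one_lt_card
    obtain ⟨k, hk⟩ := hdvd'
    have : Fintype.card ↥L = p * k + 1 :=
      (Nat.sub_eq_iff_eq_add (le_trans one_le_two hcard2)).mp hk
    rw [Nat.card_eq_fintype_card, this, Nat.mul_add_mod, Nat.mod_eq_of_lt hp.one_lt]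
  have key₂ : ∀ (z : K), z ^ p = 1 → ∀ L : IntermediateField E K, Finite ↥L →
      Nat.card ↥L % p = 1 → z ∈ L := by
    intro z hzp L hLfin hLcard
    classical
    haveI := hLfin
    haveI := Fintype.ofFinite ↥L
    rw [Nat.card_eq_fintype_card] at hLcard
    have hdvd' : p ∣ Fintype.card (↥L)ˣ := by
      rw [Fintype.card_units]
      have h := Nat.div_add_mod (Fintype.card ↥L) p
      rw [hLcard] at h
      exact ⟨Fintype.card ↥L / p, Nat.sub_eq_of_eq_add h.symm⟩
    obtain ⟨g, hg⟩ := exists_prime_orderOf_dvd_card p hdvd'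
    set y : K := ((g : ↥L) : K) with hydef
    have hyL : y ∈ L := (g : ↥L).2
    have hyp : y ^ p = 1 := by
      have : (g : ↥L) ^ p = 1 := by
        have h1 : (g ^ p : (↥L)ˣ) = 1 := by rw [← hg]; exact pow_orderOf_eq_one g
        calc (g : ↥L) ^ p = ((g ^ p : (↥L)ˣ) : ↥L) := (Units.val_pow_eq_pow_val g p).symm
        _ = 1 := by rw [h1]; rfl
      rw [hydef]
      exact_mod_cast congrArg (Subtype.val) this
    have hy1 : y ≠ 1 := by
      intro h
      have hgv : (g : ↥L) = 1 := Subtype.ext (by simpa [hydef] using h)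
      have : g = 1 := Units.val_eq_one.mp hgv
      rw [this] at hg
      simp at hg
      exact hp.ne_one hg.symm
    have hyprim : IsPrimitiveRoot y p := by
      have : orderOf y = p := orderOf_eq_prime hyp hy1
      exact this ▸ IsPrimitiveRoot.orderOf y
    obtain ⟨i, _, hi⟩ := hyprim.eq_pow_of_pow_eq_one hzp
    rw [← hi]
    exact pow_mem hyL i
  refine ⟨?_, ?_, ?_⟩
  · -- count of roots
    classical
    have hset : {ν : K | ν ^ p = algebraMap E K μ}
        = ↑(Polynomial.nthRoots p (algebraMap E K μ)).toFinset := by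
      ext x
      simp [Polynomial.mem_nthRoots hp.pos]
    rw [hset, Set.ncard_coe_finset,
      Multiset.toFinset_card_of_nodup (hξ.nthRoots_nodup hμKne),
      hξ.card_nthRoots]
    rw [if_pos ⟨ν₁, hν₁⟩]
  · -- unique root in E
    refine ⟨ν₁, ⟨hν₁, ⟨ν₀, rfl⟩⟩, ?_⟩
    rintro x ⟨hx, ⟨e, rfl⟩⟩
    have : e ^ p = ν₀ ^ p := by
      apply hinj
      rw [map_pow, hx, ← hν₀, map_pow]
    have : e = ν₀ := hpow_inj this
    rw [this]
  · intro ν hν hνnot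
    set ζ : K := ν * ν₁⁻¹ with hζdef
    have hνne : ν ≠ 0 := by
      intro h; rw [h, zero_pow hp.ne_zero] at hν; exact hμKne hν.symm
    have hζp : ζ ^ p = 1 := by
      rw [hζdef, mul_pow, inv_pow, hν, hν₁, mul_inv_cancel₀ hμKne]
    have hζ1 : ζ ≠ 1 := by
      intro h
      apply hνnot
      have : ν = ν₁ := (mul_inv_eq_one₀ hν₁ne).mp h
      exact this ▸ ⟨ν₀, rfl⟩
    have hνint : IsIntegral E ν := Algebra.IsIntegral.isIntegral ν
    haveI : FiniteDimensional E (IntermediateField.adjoin E {ν}) :=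
      IntermediateField.adjoin.finiteDimensional hνint
    haveI hfin : Finite ↥(IntermediateField.adjoin E {ν}) := Module.finite_of_finite E
    have hζmem : ζ ∈ IntermediateField.adjoin E {ν} := by
      apply mul_mem
      · exact IntermediateField.mem_adjoin_simple_self E ν
      · exact inv_mem ((IntermediateField.adjoin E {ν}).algebraMap_mem ν₀)
    refine ⟨hfin, key₁ ζ hζp hζ1 _ hfin hζmem, ?_⟩
    intro L hLfin hLcard
    have hζL : ζ ∈ L := key₂ ζ hζp L hLfin hLcard
    have hνL : ν ∈ L := by
      have : ζ * ν₁ = ν := inv_mul_cancel_right₀ hν₁ne ν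
      rw [← this]
      exact mul_mem hζL (L.algebraMap_mem ν₀)
    rw [IntermediateField.adjoin_le_iff]
    simpa using hνL
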